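/- (WSPT-TRD optimality, Part II, early case.) Suppose all weights are nonpositive (w j ≤ 0 for every j ∈ J) and the sum of the weights satisfies ∑_{j∈J} w j ≥ −1. Then the early WSPT schedule minimizes obj over all feasible single-machine schedules: obj(S_WSPT) ≤ obj(S) for every feasible schedule S, where S_WSPT denotes the early WSPT schedule. -/

import Mathlib

open Finset

private lemma pack_lemma {J : Type*} [Fintype J] (p S : J → ℕ)
    (hdisj : ∀ j k, j ≠ k → S j + p j ≤ S k ∨ S k + p k ≤ S j)
    (F : Finset J) (a b : ℕ)
    (ha : ∀ k ∈ F, a ≤ S k) (hb : ∀ k ∈ F, S k + p k ≤ b) :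
    ∑ k ∈ F, p k ≤ b - a := by
  classical
  have hd : ∀ j ∈ F, ∀ k ∈ F, j ≠ k →
      Disjoint (Finset.Ico (S j) (S j + p j)) (Finset.Ico (S k) (S k + p k)) := by
    intro j _ k _ hjk
    rcases hdisj j k hjk with h | h <;>
      (rw [Finset.disjoint_left]; intro t ht ht';
       simp only [Finset.mem_Ico] at ht ht'; omega)
  calc ∑ k ∈ F, p k = ∑ k ∈ F, (Finset.Ico (S k) (S k + p k)).card := by
        simp
    _ = (F.biUnion fun k => Finset.Ico (S k) (S k + p k)).card :=
        (Finset.card_biUnion hd).symm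
    _ ≤ (Finset.Ico a b).card := by
        apply Finset.card_le_card
        intro t ht
        simp only [Finset.mem_biUnion, Finset.mem_Ico] at ht ⊢
        obtain ⟨k, hk, h1, h2⟩ := ht
        exact ⟨le_trans (ha k hk) h1, lt_of_lt_of_le h2 (hb k hk)⟩
    _ = b - a := Nat.card_Ico a b

private def Qd {J : Type*} [Fintype J] (p X : J → ℕ) (j : J) : ℕ :=
  ∑ k ∈ univ.filter (fun k => X j < X k), p k

private def phi {J : Type*} (p : J → ℕ) (w : J → ℚ) (X : J → ℕ) (j k : J) : ℚ :=
  if X j < X k then w j * (p k : ℚ) else 0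

/-- WSPT-TRD optimality, Part II (early case): with nonpositive weights summing to at least -1, the early WSPT schedule
minimizes `obj(S) = Cmax(S) + ∑ j, w j * S j` over all feasible schedules. -/
theorem wspt_trd_part_two_early
    {J : Type*} [Fintype J] [Nonempty J]
    (p : J → ℕ) (w : J → ℚ) (T0 Tf : ℕ)
    (hp : ∀ j, 1 ≤ p j) (hT : T0 + ∑ j, p j ≤ Tf)
    (hw : ∀ j, w j ≤ 0) (hsum : -1 ≤ ∑ j, w j)
    (e : Fin (Fintype.card J) ≃ J)
    (hord : ∀ i : ℕ, ∀ h : i + 1 < Fintype.card J,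
      w (e ⟨i + 1, h⟩) / (p (e ⟨i + 1, h⟩) : ℚ)
        ≤ w (e ⟨i, Nat.lt_of_succ_lt h⟩) / (p (e ⟨i, Nat.lt_of_succ_lt h⟩) : ℚ))
    (SW : J → ℕ)
    (hSW0 : SW (e ⟨0, Fintype.card_pos⟩) = T0)
    (hSWstep : ∀ i : ℕ, ∀ h : i + 1 < Fintype.card J,
      SW (e ⟨i + 1, h⟩)
        = SW (e ⟨i, Nat.lt_of_succ_lt h⟩) + p (e ⟨i, Nat.lt_of_succ_lt h⟩)) :
    ∀ S : J → ℕ,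
      (∀ j, T0 ≤ S j) → (∀ j, S j + p j ≤ Tf) →
      (∀ j k, j ≠ k → S j + p j ≤ S k ∨ S k + p k ≤ S j) →
      ((univ.sup' univ_nonempty (fun j => SW j + p j) : ℕ) : ℚ)
          + ∑ j, w j * (SW j : ℚ)
        ≤ ((univ.sup' univ_nonempty (fun j => S j + p j) : ℕ) : ℚ)
          + ∑ j, w j * (S j : ℚ) := by
  classical
  intro S hS0 hSf hSdisj
  have hn0 : 0 < Fintype.card J := Fintype.card_pos
  set P : ℕ := ∑ j, p j with hP
  set MS : ℕ := univ.sup' univ_nonempty (fun j => S j + p j) with hMS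
  -- bound for S
  have hQS : ∀ j, S j + p j + Qd p S j ≤ MS := by
    intro j
    have h1 : Qd p S j ≤ MS - (S j + p j) := by
      apply pack_lemma p S hSdisj _ (S j + p j) MS
      · intro k hk
        simp only [mem_filter] at hk
        have hjk : j ≠ k := by
          intro h; rw [h] at hk; exact lt_irrefl _ hk.2
        rcases hSdisj j k hjk with h | h
        · exact h
        · have := hp k; omega
      · intro k _
        exact Finset.le_sup' (fun j => S j + p j) (mem_univ k)
    have h2 : S j + p j ≤ MS := Finset.le_sup' (fun j => S j + p j) (mem_univ j)
    omega
  have hT0MS : T0 + P ≤ MS := by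
    have h1 : P ≤ MS - T0 := by
      apply pack_lemma p S hSdisj univ T0 MS
      · intro k _; exact hS0 k
      · intro k _; exact Finset.le_sup' (fun j => S j + p j) (mem_univ k)
    have j0 : J := Classical.arbitrary J
    have h2 : T0 ≤ MS :=
      le_trans (le_trans (hS0 j0) (Nat.le_add_right _ _)) (Finset.le_sup' (fun j => S j + p j) (mem_univ j0))
    omega
  -- S is injective
  have hSne : ∀ j k, j ≠ k → S j ≠ S k := by
    intro j k hjk heq
    rcases hSdisj j k hjk with h | h
    · have := hp j; omega
    · have := hp k; omega
  -- structure of SW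
  set q : ℕ → ℕ := fun i => if h : i < Fintype.card J then p (e ⟨i, h⟩) else 1 with hqdef
  have hq1 : ∀ i, 1 ≤ q i := by
    intro i; rw [hqdef]; dsimp only; split
    · exact hp _
    · exact le_refl 1
  have hqval : ∀ (i : ℕ) (h : i < Fintype.card J), q i = p (e ⟨i, h⟩) := by
    intro i h; rw [hqdef]; dsimp only; rw [dif_pos h]
  have hA : ∀ m (h : m < Fintype.card J), SW (e ⟨m, h⟩) = T0 + ∑ k ∈ range m, q k := by
    intro m
    induction m with
    | zero => intro h; simpa using hSW0
    | succ m ih =>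
      intro h
      have hm : m < Fintype.card J := Nat.lt_of_succ_lt h
      rw [hSWstep m h, ih hm, Finset.sum_range_succ, hqval m hm, add_assoc]
  set r : J → ℕ := fun j => (e.symm j : ℕ) with hrdef
  have hrn : ∀ j, r j < Fintype.card J := fun j => (e.symm j).isLt
  have her : ∀ (j : J) (h : r j < Fintype.card J), e ⟨r j, h⟩ = j := by
    intro j h
    have : (⟨r j, h⟩ : Fin (Fintype.card J)) = e.symm j := Fin.ext rfl
    rw [this, Equiv.apply_symm_apply]
  have hre : ∀ i : Fin (Fintype.card J), r (e i) = i := by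
    intro i; rw [hrdef]; simp
  have hSWr : ∀ j, SW j = T0 + ∑ k ∈ range (r j), q k := by
    intro j
    conv_lhs => rw [← her j (hrn j)]
    exact hA (r j) (hrn j)
  have hrinj : ∀ j k, r j = r k → j = k := by
    intro j k h
    have h2 : e.symm j = e.symm k := Fin.ext h
    exact e.symm.injective h2
  have hmono : ∀ a b : ℕ, a < b → ∑ k ∈ range a, q k < ∑ k ∈ range b, q k := by
    intro a b hab
    have h1 : (∑ k ∈ Finset.Ico 0 a, q k) + ∑ k ∈ Finset.Ico a b, q k
        = ∑ k ∈ Finset.Ico 0 b, q k :=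
      Finset.sum_Ico_consecutive q (Nat.zero_le a) (Nat.le_of_lt hab)
    have h2 : 1 ≤ ∑ k ∈ Finset.Ico a b, q k := by
      calc 1 ≤ q a := hq1 a
        _ ≤ ∑ k ∈ Finset.Ico a b, q k :=
          Finset.single_le_sum (fun i _ => Nat.zero_le _)
            (by simp [Finset.mem_Ico]; omega)
    rw [Finset.range_eq_Ico, Finset.range_eq_Ico]
    omega
  have hlt : ∀ j k, SW j < SW k ↔ r j < r k := by
    intro j k
    rw [hSWr j, hSWr k]
    constructor
    · intro h
      by_contra hc
      push_neg at hc
      have : ∑ k' ∈ range (r k), q k' ≤ ∑ k' ∈ range (r j), q k' := by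
        rcases Nat.eq_or_lt_of_le hc with h' | h'
        · rw [h']
        · exact le_of_lt (hmono _ _ h')
      omega
    · intro h
      have := hmono _ _ h
      omega
  have hrange : ∀ m, m ≤ Fintype.card J →
      ∑ k ∈ univ.filter (fun k => r k < m), p k = ∑ i ∈ range m, q i := by
    intro m hm
    rw [Finset.sum_filter]
    rw [← Equiv.sum_comp e (fun k => if r k < m then (p k : ℕ) else 0)]
    have h1 : ∀ i : Fin (Fintype.card J),
        (if r (e i) < m then (p (e i) : ℕ) else 0)
          = (fun x : ℕ => if x < m then q x else 0) (i : ℕ) := by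
      intro i
      rw [hre i]
      dsimp only
      by_cases h : (i : ℕ) < m
      · rw [if_pos h, if_pos h, hqval i i.isLt]
      · rw [if_neg h, if_neg h]
    rw [Finset.sum_congr rfl (fun i _ => h1 i),
      Fin.sum_univ_eq_sum_range (fun x : ℕ => if x < m then q x else 0) (Fintype.card J)]
    rw [← Finset.sum_filter]
    congr 1
    ext x
    simp only [Finset.mem_filter, Finset.mem_range]
    omega
  have hSWr' : ∀ j, SW j = T0 + ∑ k ∈ univ.filter (fun k => r k < r j), p k := by
    intro j
    rw [hSWr j, hrange (r j) (le_of_lt (hrn j))]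
  have hQSW : ∀ j, Qd p SW j = ∑ k ∈ univ.filter (fun k => r j < r k), p k := by
    intro j
    unfold Qd
    congr 1
    ext k
    simp only [Finset.mem_filter, Finset.mem_univ, true_and]
    exact hlt j k
  have hkey : ∀ j, SW j + p j + Qd p SW j = T0 + P := by
    intro j
    have h1 := Finset.sum_filter_add_sum_filter_not univ (fun k => r k ≤ r j) p
    have h2 : univ.filter (fun k => ¬ r k ≤ r j) = univ.filter (fun k => r j < r k) := by
      ext k; simp [Nat.not_le]
    have h3 : univ.filter (fun k => r k ≤ r j)
        = insert j (univ.filter (fun k => r k < r j)) := by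
      ext k
      simp only [Finset.mem_filter, Finset.mem_univ, true_and, Finset.mem_insert]
      constructor
      · intro h
        rcases Nat.lt_or_ge (r k) (r j) with h' | h'
        · exact Or.inr h'
        · exact Or.inl (hrinj k j (le_antisymm h h'))
      · rintro (rfl | h)
        · exact le_refl _
        · exact le_of_lt h
    have h4 : j ∉ univ.filter (fun k => r k < r j) := by simp
    rw [h3, Finset.sum_insert h4, h2] at h1
    rw [hSWr' j, hQSW j, hP]
    omega
  have hMSW : univ.sup' univ_nonempty (fun j => SW j + p j) = T0 + P := by
    apply le_antisymm
    · apply Finset.sup'_le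
      intro j _
      have := hkey j
      omega
    · have hlast : Fintype.card J - 1 < Fintype.card J := by omega
      set j0 := e ⟨Fintype.card J - 1, hlast⟩ with hj0def
      have hrj0 : r j0 = Fintype.card J - 1 := by rw [hj0def, hre]
      have hQ0 : Qd p SW j0 = 0 := by
        rw [hQSW j0]
        apply Finset.sum_eq_zero
        intro k hk
        simp only [Finset.mem_filter] at hk
        have := hrn k
        omega
      have h5 := hkey j0
      have h6 : T0 + P = SW j0 + p j0 := by omega
      rw [h6]
      exact Finset.le_sup' (fun j => SW j + p j) (mem_univ j0)
  -- ratios are antitone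
  set g : ℕ → ℚ := fun i => if h : i < Fintype.card J then w (e ⟨i, h⟩) / (p (e ⟨i, h⟩) : ℚ) else 0
    with hgdef
  have hgval : ∀ (i : ℕ) (h : i < Fintype.card J), g i = w (e ⟨i, h⟩) / (p (e ⟨i, h⟩) : ℚ) := by
    intro i h; rw [hgdef]; dsimp only; rw [dif_pos h]
  have hgstep : ∀ i, i + 1 < Fintype.card J → g (i + 1) ≤ g i := by
    intro i h
    have h' : i < Fintype.card J := Nat.lt_of_succ_lt h
    rw [hgval (i + 1) h, hgval i h']
    exact hord i h
  have hg : ∀ a b, a ≤ b → b < Fintype.card J → g b ≤ g a := by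
    intro a b hab
    induction b, hab using Nat.le_induction with
    | base => intro _; exact le_refl _
    | succ b hab ih =>
      intro h
      exact le_trans (hgstep b h) (ih (Nat.lt_of_succ_lt h))
  have hratio : ∀ j k, r j < r k → w k * (p j : ℚ) ≤ w j * (p k : ℚ) := by
    intro j k h
    have h1 : g (r k) ≤ g (r j) := hg (r j) (r k) (le_of_lt h) (hrn k)
    rw [hgval (r j) (hrn j), hgval (r k) (hrn k), her j (hrn j), her k (hrn k)] at h1
    have hpj : (0 : ℚ) < (p j : ℚ) := by exact_mod_cast hp j
    have hpk : (0 : ℚ) < (p k : ℚ) := by exact_mod_cast hp k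
    rw [div_le_div_iff₀ hpk hpj] at h1
    exact h1
  -- pairwise comparison
  have hpair : ∀ j k, phi p w S j k + phi p w S k j ≤ phi p w SW j k + phi p w SW k j := by
    intro j k
    by_cases hjk : j = k
    · rw [hjk]; unfold phi; simp
    · rcases Nat.lt_trichotomy (r j) (r k) with h | h | h
      · have h1 : SW j < SW k := (hlt j k).2 h
        have h2 : ¬ SW k < SW j := by omega
        have hmax : w k * (p j : ℚ) ≤ w j * (p k : ℚ) := hratio j k h
        have hRHS : phi p w SW j k + phi p w SW k j = w j * (p k : ℚ) := by
          unfold phi; rw [if_pos h1, if_neg h2, add_zero]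
        rw [hRHS]
        rcases Nat.lt_trichotomy (S j) (S k) with h3 | h3 | h3
        · have h4 : ¬ S k < S j := by omega
          unfold phi; rw [if_pos h3, if_neg h4, add_zero]
        · exact absurd h3 (hSne j k hjk)
        · have h4 : ¬ S j < S k := by omega
          unfold phi; rw [if_neg h4, if_pos h3, zero_add]
          exact hmax
      · exact absurd (hrinj j k h) hjk
      · have h1 : SW k < SW j := (hlt k j).2 h
        have h2 : ¬ SW j < SW k := by omega
        have hmax : w j * (p k : ℚ) ≤ w k * (p j : ℚ) := hratio k j h
        have hRHS : phi p w SW j k + phi p w SW k j = w k * (p j : ℚ) := by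
          unfold phi; rw [if_pos h1, if_neg h2, zero_add]
        rw [hRHS]
        rcases Nat.lt_trichotomy (S j) (S k) with h3 | h3 | h3
        · have h4 : ¬ S k < S j := by omega
          unfold phi; rw [if_pos h3, if_neg h4, add_zero]
          exact hmax
        · exact absurd h3 (hSne j k hjk)
        · have h4 : ¬ S j < S k := by omega
          unfold phi; rw [if_neg h4, if_pos h3, zero_add]
  have hRsum : ∀ X : J → ℕ,
      ∑ j, w j * (Qd p X j : ℚ) = ∑ j, ∑ k, phi p w X j k := by
    intro X
    apply Finset.sum_congr rfl
    intro j _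
    have hc : ((Qd p X j : ℕ) : ℚ) = ∑ k ∈ univ.filter (fun k => X j < X k), (p k : ℚ) := by
      unfold Qd; push_cast; rfl
    rw [hc, Finset.mul_sum, Finset.sum_filter]
    rfl
  have hswap : ∀ X : J → ℕ,
      ∑ j, ∑ k, phi p w X k j = ∑ j, ∑ k, phi p w X j k := fun X => Finset.sum_comm
  have hsplitsum : ∀ X : J → ℕ,
      ∑ j, ∑ k, (phi p w X j k + phi p w X k j)
        = 2 * ∑ j, ∑ k, phi p w X j k := by
    intro X
    have h1 : ∑ j, ∑ k, (phi p w X j k + phi p w X k j)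
        = (∑ j, ∑ k, phi p w X j k) + ∑ j, ∑ k, phi p w X k j := by
      rw [← Finset.sum_add_distrib]
      apply Finset.sum_congr rfl
      intro j _
      rw [← Finset.sum_add_distrib]
    rw [h1, hswap X]
    ring
  have hRle : ∑ j, w j * (Qd p S j : ℚ) ≤ ∑ j, w j * (Qd p SW j : ℚ) := by
    rw [hRsum S, hRsum SW]
    have h1 : ∑ j, ∑ k, (phi p w S j k + phi p w S k j)
        ≤ ∑ j, ∑ k, (phi p w SW j k + phi p w SW k j) :=
      Finset.sum_le_sum (fun j _ => Finset.sum_le_sum (fun k _ => hpair j k))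
    rw [hsplitsum S, hsplitsum SW] at h1
    linarith
  -- assemble
  set Wq : ℚ := ∑ j, w j with hWq
  have hWq1 : (0 : ℚ) ≤ 1 + Wq := by linarith
  have hSWexp : ∑ j, w j * (SW j : ℚ)
      = Wq * ((T0 + P : ℕ) : ℚ) - (∑ j, w j * (p j : ℚ)) - ∑ j, w j * (Qd p SW j : ℚ) := by
    rw [hWq, Finset.sum_mul, ← Finset.sum_sub_distrib, ← Finset.sum_sub_distrib]
    apply Finset.sum_congr rfl
    intro j _
    have h1 : (SW j : ℚ) = ((T0 + P : ℕ) : ℚ) - (p j : ℚ) - (Qd p SW j : ℚ) := by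
      have := hkey j
      have h2 : ((SW j + p j + Qd p SW j : ℕ) : ℚ) = ((T0 + P : ℕ) : ℚ) := by
        exact_mod_cast congrArg (Nat.cast : ℕ → ℚ) this
      push_cast at h2 ⊢
      linarith
    rw [h1]
    ring
  have hSexp : Wq * (MS : ℚ) - (∑ j, w j * (p j : ℚ)) - (∑ j, w j * (Qd p S j : ℚ))
      ≤ ∑ j, w j * (S j : ℚ) := by
    have h1 : ∀ j, w j * ((MS : ℚ) - (p j : ℚ) - (Qd p S j : ℚ)) ≤ w j * (S j : ℚ) := by
      intro j
      apply mul_le_mul_of_nonpos_left _ (hw j)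
      have := hQS j
      have h2 : ((S j + p j + Qd p S j : ℕ) : ℚ) ≤ ((MS : ℕ) : ℚ) := by
        exact_mod_cast this
      push_cast at h2
      linarith
    calc Wq * (MS : ℚ) - (∑ j, w j * (p j : ℚ)) - (∑ j, w j * (Qd p S j : ℚ))
        = ∑ j, w j * ((MS : ℚ) - (p j : ℚ) - (Qd p S j : ℚ)) := by
          rw [hWq, Finset.sum_mul, ← Finset.sum_sub_distrib, ← Finset.sum_sub_distrib]
          apply Finset.sum_congr rfl
          intro j _
          ring
      _ ≤ ∑ j, w j * (S j : ℚ) := Finset.sum_le_sum (fun j _ => h1 j)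
  have hcast : ((T0 + P : ℕ) : ℚ) ≤ (MS : ℚ) := by exact_mod_cast hT0MS
  have hprod : ((T0 + P : ℕ) : ℚ) * (1 + Wq) ≤ (MS : ℚ) * (1 + Wq) :=
    mul_le_mul_of_nonneg_right hcast hWq1
  rw [hMSW]
  linarith [hRle, hSWexp, hSexp, hprod]
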